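/- Let v ∈ ℝ^n \ {0} and let Q ≥ 1 be a real number. Then there exists a T-periodic vector ω ∈ ℝ^n \ {0} such that ‖v − ω‖ ≤ √(n−1) (TQ)^{−1} and ‖v‖^{−1} ≤ T ≤ √n ‖v‖^{−1} Q^{n−1}. -/

import Mathlib

open scoped BigOperators

noncomputable section

namespace Elliptic

open MeasureTheory Submodule

/-- Simultaneous Dirichlet approximation with a real parameter. -/
lemma dirichlet_sim (d : ℕ) (x : Fin d → ℝ) (Q : ℝ) (hQ : 1 ≤ Q) :
    ∃ (q : ℤ) (p : Fin d → ℤ), 1 ≤ q ∧ (q : ℝ) ≤ Q ^ d ∧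
      ∀ j, |(q : ℝ) * x j - p j| ≤ 1 / Q := by
  have hQ0 : (0 : ℝ) < Q := lt_of_lt_of_le one_pos hQ
  rcases le_or_gt Q 2 with hQ2 | hQ2
  · -- easy case : q = 1, round coordinatewise
    refine ⟨1, fun j => round (x j), le_refl _, ?_, fun j => ?_⟩
    · exact_mod_cast one_le_pow₀ hQ
    · have h1 := abs_sub_round (x j)
      have h2 : 1 / 2 ≤ 1 / Q := one_div_le_one_div_of_le hQ0 hQ2
      push_cast
      rw [one_mul]
      linarith
  · -- Minkowski case
    have hQd : (0:ℝ) < Q ^ d := pow_pos hQ0 d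
    set c : Fin (d+1) → ℝ := Fin.cases 0 x with hc
    have hc0 : c 0 = 0 := rfl
    -- the shear map
    set A : (Fin (d+1) → ℝ) →ₗ[ℝ] (Fin (d+1) → ℝ) :=
      { toFun := fun y k => y k + c k * y 0
        map_add' := by intro y z; funext k; simp; ring
        map_smul' := by intro r y; funext k; simp; ring } with hA
    have hAapp : ∀ (y : Fin (d+1) → ℝ) (k), A y k = y k + c k * y 0 := fun y k => rfl
    -- determinant of A is 1
    have hdet : LinearMap.det A = 1 := by
      rw [← LinearMap.det_toMatrix']
      rw [Matrix.det_of_lowerTriangular (LinearMap.toMatrix' A)]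
      · rw [Finset.prod_eq_one]
        intro k _
        rw [LinearMap.toMatrix'_apply, hAapp]
        simp only [Pi.single_eq_same]
        rcases eq_or_ne k 0 with rfl | hk
        · simp [hc0]
        · simp [Pi.single_apply, hk, Ne.symm hk]
      · intro i j hij
        rw [LinearMap.toMatrix'_apply, hAapp]
        have hij' : i < j := hij
        have h1 : i ≠ j := ne_of_lt hij'
        have h2 : (0 : Fin (d+1)) ≠ j :=
          ne_of_lt (lt_of_le_of_lt (Fin.zero_le i) hij')
        simp [Pi.single_apply, h1, h2, Ne.symm h1, Ne.symm h2]
    -- the box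
    set r : Fin (d+1) → ℝ := Fin.cases (Q ^ d) (fun _ => 1 / Q) with hr
    set B : Set (Fin (d+1) → ℝ) := Set.pi Set.univ fun k => Set.Icc (-(r k)) (r k) with hB
    set s : Set (Fin (d+1) → ℝ) := A '' B with hs
    -- volume computations
    have hvolB : volume B = ENNReal.ofReal ((2 * Q ^ d) * (2 * (1/Q)) ^ d) := by
      rw [hB, volume_pi_pi]
      have : ∀ k : Fin (d+1), volume (Set.Icc (-(r k)) (r k)) = ENNReal.ofReal (2 * r k) := by
        intro k; rw [Real.volume_Icc]; congr 1; ring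
      simp_rw [this]
      rw [Fin.prod_univ_succ]
      have hr0 : r 0 = Q ^ d := rfl
      have hrs : ∀ j : Fin d, r j.succ = 1 / Q := fun j => rfl
      simp_rw [hr0, hrs]
      rw [Finset.prod_const, Finset.card_univ, Fintype.card_fin,
        ← ENNReal.ofReal_pow (by positivity), ← ENNReal.ofReal_mul (by positivity)]
    have hvols : volume s = ENNReal.ofReal ((2 * Q ^ d) * (2 * (1/Q)) ^ d) := by
      rw [hs, Measure.addHaar_image_linearMap, hdet, hvolB]
      simp
    -- Minkowski hypotheses
    have hsymm : ∀ y ∈ s, -y ∈ s := by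
      rintro _ ⟨b, hb, rfl⟩
      refine ⟨-b, ?_, by rw [map_neg]⟩
      intro k _
      have := hb k (Set.mem_univ k)
      simp only [Set.mem_Icc, Pi.neg_apply] at this ⊢
      constructor <;> linarith [this.1, this.2]
    have hconv : Convex ℝ s := by
      refine Convex.linear_image ?_ A
      exact convex_pi fun k _ => convex_Icc _ _
    have hcpt : IsCompact s := by
      refine IsCompact.image ?_ A.continuous_of_finiteDimensional
      exact isCompact_univ_pi fun k => isCompact_Icc
    -- the lattice
    set bas := Pi.basisFun ℝ (Fin (d+1)) with hbas
    have fund := ZSpan.isAddFundamentalDomain' bas volume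
    have hvolF : volume (ZSpan.fundamentalDomain bas) = 1 := by
      rw [hbas, ZSpan.fundamentalDomain_pi_basisFun, volume_pi_pi]
      simp
    have hineq : volume (ZSpan.fundamentalDomain bas) *
        2 ^ Module.finrank ℝ (Fin (d+1) → ℝ) ≤ volume s := by
      rw [hvolF, one_mul, hvols]
      have hfr : Module.finrank ℝ (Fin (d+1) → ℝ) = d + 1 := by
        simp [Module.finrank_pi]
      rw [hfr]
      have heq : (2 * Q ^ d) * (2 * (1/Q)) ^ d = 2 ^ (d+1) := by
        have h1 : Q ^ d * (1/Q) ^ d = 1 := by rw [← mul_pow, mul_one_div_cancel hQ0.ne', one_pow]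
        linear_combination (2 ^ d * 2 : ℝ) * h1
      rw [heq, ENNReal.ofReal_pow (by norm_num : (0:ℝ) ≤ 2), ENNReal.ofReal_ofNat]
    have : Countable (span ℤ (Set.range ⇑bas)).toAddSubgroup := by
      change Countable (span ℤ (Set.range ⇑bas)); infer_instance
    obtain ⟨y, hy0, hys⟩ :=
      exists_ne_zero_mem_lattice_of_measure_mul_two_pow_le_measure fund hsymm hconv hcpt hineq
    -- extract integer coordinates
    have hyint : ∀ k, ∃ m : ℤ, ((y : Fin (d+1) → ℝ) k) = (m : ℝ) := by
      intro k
      have hmem : (y : Fin (d+1) → ℝ) ∈ span ℤ (Set.range bas) := by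
        exact_mod_cast (y : (span ℤ (Set.range bas)).toAddSubgroup).2
      obtain ⟨m, hm⟩ := (bas.mem_span_iff_repr_mem ℤ _).mp hmem k
      exact ⟨m, by simpa [hbas, eq_comm] using hm⟩
    choose cz hcz using hyint
    -- unpack membership in s
    obtain ⟨b0, hb0B, hb0⟩ := hys
    have hb00 : b0 0 = (y : Fin (d+1) → ℝ) 0 := by
      have := congrFun hb0 0
      rw [hAapp, hc0] at this
      linarith [this]
    have hkey : ∀ j : Fin d, (y : Fin (d+1) → ℝ) j.succ - x j * (y : Fin (d+1) → ℝ) 0 = b0 j.succ := by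
      intro j
      have := congrFun hb0 j.succ
      rw [hAapp] at this
      have hcs : c j.succ = x j := rfl
      rw [hcs] at this
      rw [← this, hb00]
      ring
    have hbnd0 : |(y : Fin (d+1) → ℝ) 0| ≤ Q ^ d := by
      have := hb0B 0 (Set.mem_univ 0)
      rw [← hb00]
      have hr0 : r 0 = Q ^ d := rfl
      rw [Set.mem_Icc, hr0] at this
      exact abs_le.mpr this
    have hbndj : ∀ j : Fin d,
        |(y : Fin (d+1) → ℝ) j.succ - x j * (y : Fin (d+1) → ℝ) 0| ≤ 1 / Q := by
      intro j
      rw [hkey j]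
      have := hb0B j.succ (Set.mem_univ j.succ)
      have hrs : r j.succ = 1 / Q := rfl
      rw [Set.mem_Icc, hrs] at this
      exact abs_le.mpr this
    -- the leading coefficient is a nonzero integer
    have hy0' : (y : Fin (d+1) → ℝ) ≠ 0 := by
      intro h
      apply hy0
      ext
      exact congrFun h _
    have hcz0 : cz 0 ≠ 0 := by
      intro h
      apply hy0'
      funext k
      rcases Fin.eq_zero_or_eq_succ k with rfl | ⟨j, rfl⟩
      · rw [hcz 0, h]; simp
      · have h0 : (y : Fin (d+1) → ℝ) 0 = 0 := by rw [hcz 0, h]; simp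
        have := hbndj j
        rw [h0, mul_zero, sub_zero, hcz j.succ] at this
        have h1Q : 1 / Q < 1 := by
          rw [div_lt_one hQ0]; linarith
        have : |(cz j.succ : ℝ)| < 1 := lt_of_le_of_lt this h1Q
        have : cz j.succ = 0 := by
          by_contra hne
          have : (1:ℝ) ≤ |(cz j.succ : ℝ)| := by
            exact_mod_cast Int.one_le_abs (by simpa using hne)
          linarith
        rw [hcz j.succ, this]; simp
    -- choose the sign
    rcases lt_or_gt_of_ne hcz0 with hneg | hpos
    · refine ⟨-(cz 0), fun j => -(cz j.succ), by omega, ?_, fun j => ?_⟩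
      · have : |(cz 0 : ℝ)| ≤ Q ^ d := by rw [← hcz 0]; exact hbnd0
        rw [abs_of_neg (by exact_mod_cast hneg)] at this
        push_cast
        linarith
      · have := hbndj j
        rw [hcz 0, hcz j.succ] at this
        have heq : ((-(cz 0) : ℤ) : ℝ) * x j - ((-(cz j.succ) : ℤ) : ℝ)
            = (cz j.succ : ℝ) - x j * (cz 0 : ℝ) := by push_cast; ring
        rw [heq]
        exact this
    · refine ⟨cz 0, fun j => cz j.succ, hpos, ?_, fun j => ?_⟩
      · have : |(cz 0 : ℝ)| ≤ Q ^ d := by rw [← hcz 0]; exact hbnd0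
        rw [abs_of_pos (by exact_mod_cast hpos)] at this
        exact this
      · have := hbndj j
        rw [hcz 0, hcz j.succ] at this
        have heq : (cz 0 : ℝ) * x j - (cz j.succ : ℝ)
            = -((cz j.succ : ℝ) - x j * (cz 0 : ℝ)) := by ring
        rw [heq, abs_neg]
        exact this


/-- ω is a `T`-periodic vector: `T > 0` and `T • ω ∈ ℤ^n`. -/
def IsPeriodic (n : ℕ) (T : ℝ) (ω : EuclideanSpace ℝ (Fin n)) : Prop :=
  0 < T ∧ ∃ k : Fin n → ℤ, ∀ j, T * ω j = (k j : ℝ)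

/-- **Dirichlet approximation by periodic vectors** (Lemma 5.4).
Let `v ∈ ℝ^n \ {0}` and `Q ≥ 1`.  Then there exists a `T`-periodic vector
`ω ∈ ℝ^n \ {0}` such that `‖v − ω‖ ≤ √(n−1) (TQ)⁻¹` and
`‖v‖⁻¹ ≤ T ≤ √n ‖v‖⁻¹ Q^{n−1}`. -/
theorem dirichlet_periodic_approximation
    (n : ℕ) (hn : 2 ≤ n)
    (v : EuclideanSpace ℝ (Fin n)) (hv : v ≠ 0)
    (Q : ℝ) (hQ : 1 ≤ Q) :
    ∃ (T : ℝ) (ω : EuclideanSpace ℝ (Fin n)), ω ≠ 0 ∧ IsPeriodic n T ω ∧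
      ‖v - ω‖ ≤ Real.sqrt (n - 1) * (T * Q)⁻¹ ∧
      ‖v‖⁻¹ ≤ T ∧ T ≤ Real.sqrt n * ‖v‖⁻¹ * Q ^ (n - 1) := by
  have hQ0 : (0:ℝ) < Q := lt_of_lt_of_le one_pos hQ
  obtain ⟨m, rfl⟩ : ∃ m, n = m + 1 := ⟨n - 1, by omega⟩
  have hi0 : (0 : Fin (m+1)) = 0 := rfl
  obtain ⟨i, -, hi⟩ := Finset.exists_max_image Finset.univ (fun k => |v k|)
    ⟨0, Finset.mem_univ 0⟩
  have hi' : ∀ k, |v k| ≤ |v i| := fun k => hi k (Finset.mem_univ k)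
  have hvi : v i ≠ 0 := by
    intro h
    apply hv
    ext k
    have h1 := hi' k
    rw [h, abs_zero] at h1
    have : v k = 0 := abs_eq_zero.mp (le_antisymm h1 (abs_nonneg _))
    exact this
  have habs : (0:ℝ) < |v i| := abs_pos.mpr hvi
  set x : Fin m → ℝ := fun j => v (i.succAbove j) / |v i| with hx
  obtain ⟨q, p, hq1, hqQ, herr⟩ := dirichlet_sim m x Q hQ
  have hq0 : (0:ℝ) < (q:ℝ) := by exact_mod_cast hq1
  set T : ℝ := (q:ℝ) / |v i| with hT
  have hT0 : 0 < T := div_pos hq0 habs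
  set ε : ℤ := if 0 < v i then 1 else -1 with hε
  have hεv : (ε:ℝ) * |v i| = v i := by
    rcases lt_trichotomy (v i) 0 with hlt | heq | hgt
    · rw [hε, if_neg (by linarith), abs_of_neg hlt]; push_cast; ring
    · exact absurd heq hvi
    · rw [hε, if_pos hgt, abs_of_pos hgt]; push_cast; ring
  set z : Fin (m+1) → ℤ := i.insertNth (ε * q) p with hz
  set ω : EuclideanSpace ℝ (Fin (m+1)) := WithLp.toLp 2 (fun k => (z k : ℝ) / T) with hω
  have hωi : ω i = v i := by
    show ((z i : ℝ)) / T = v i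
    rw [hz, Fin.insertNth_apply_same, hT]
    push_cast
    field_simp
    linear_combination hεv
  have hωs : ∀ j : Fin m, ω (i.succAbove j) = (p j : ℝ) / T := by
    intro j
    show ((z (i.succAbove j) : ℝ)) / T = _
    rw [hz, Fin.insertNth_apply_succAbove]
  have hωne : ω ≠ 0 := by
    intro h
    apply hvi
    rw [← hωi, h]
    rfl
  have hTω : ∀ k, T * ω k = (z k : ℝ) := by
    intro k
    show T * ((z k : ℝ) / T) = _
    field_simp
  refine ⟨T, ω, hωne, ⟨hT0, z, hTω⟩, ?_, ?_, ?_⟩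
  · -- approximation bound
    have herr' : ∀ j : Fin m, |v (i.succAbove j) - ω (i.succAbove j)| ≤ (T * Q)⁻¹ := by
      intro j
      rw [hωs j]
      have h1 : v (i.succAbove j) - (p j : ℝ) / T = ((q:ℝ) * x j - p j) / T := by
        rw [hx, hT]
        field_simp
      rw [h1, abs_div, abs_of_pos hT0, div_le_iff₀ hT0]
      calc |(q:ℝ) * x j - p j| ≤ 1 / Q := herr j
        _ = (T * Q)⁻¹ * T := by field_simp
    have hnorm : ‖v - ω‖ = Real.sqrt (∑ k, ‖(v - ω) k‖ ^ 2) := EuclideanSpace.norm_eq _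
    rw [hnorm]
    have hsum : ∑ k, ‖(v - ω) k‖ ^ 2 ≤ (m : ℝ) * ((T * Q)⁻¹) ^ 2 := by
      rw [Fin.sum_univ_succAbove (fun k => ‖(v - ω) k‖ ^ 2) i]
      have h0 : ‖(v - ω) i‖ ^ 2 = 0 := by
        have : (v - ω) i = v i - ω i := rfl
        rw [this, hωi, sub_self, norm_zero]
        norm_num
      rw [h0, zero_add]
      calc ∑ j : Fin m, ‖(v - ω) (i.succAbove j)‖ ^ 2
          ≤ ∑ j : Fin m, ((T * Q)⁻¹) ^ 2 := by
            refine Finset.sum_le_sum fun j _ => ?_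
            have h1 : (v - ω) (i.succAbove j) = v (i.succAbove j) - ω (i.succAbove j) := rfl
            rw [h1, Real.norm_eq_abs]
            exact pow_le_pow_left₀ (abs_nonneg _) (herr' j) 2
        _ = (m : ℝ) * ((T * Q)⁻¹) ^ 2 := by
            rw [Finset.sum_const, Finset.card_univ, Fintype.card_fin, nsmul_eq_mul]
    calc Real.sqrt (∑ k, ‖(v - ω) k‖ ^ 2) ≤ Real.sqrt ((m : ℝ) * ((T * Q)⁻¹) ^ 2) :=
          Real.sqrt_le_sqrt hsum
      _ = Real.sqrt (m : ℝ) * (T * Q)⁻¹ := by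
          rw [Real.sqrt_mul (by positivity), Real.sqrt_sq (by positivity)]
      _ = Real.sqrt ((m+1 : ℕ) - 1 : ℝ) * (T * Q)⁻¹ := by
          congr 2
          push_cast
          ring
  · -- lower bound on T
    have hvn : 0 < ‖v‖ := norm_pos_iff.mpr hv
    have h1 : |v i| ≤ ‖v‖ := by
      rw [EuclideanSpace.norm_eq]
      have h2 : |v i| = Real.sqrt (‖v i‖ ^ 2) := by
        rw [Real.sqrt_sq_eq_abs, Real.norm_eq_abs, abs_abs]
      rw [h2]
      apply Real.sqrt_le_sqrt
      exact Finset.single_le_sum (f := fun k => ‖v k‖ ^ 2)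
        (fun k _ => by positivity) (Finset.mem_univ i)
    calc ‖v‖⁻¹ ≤ |v i|⁻¹ := by
          apply inv_anti₀ habs h1
      _ ≤ T := by
          rw [hT, inv_eq_one_div]
          gcongr
          simpa using (show (1:ℝ) ≤ q by exact_mod_cast hq1)
  · -- upper bound on T
    have hvn : 0 < ‖v‖ := norm_pos_iff.mpr hv
    have h1 : ‖v‖ ≤ Real.sqrt ((m+1 : ℕ)) * |v i| := by
      rw [EuclideanSpace.norm_eq]
      have h2 : ∑ k, ‖v k‖ ^ 2 ≤ ((m+1 : ℕ) : ℝ) * |v i| ^ 2 := by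
        calc ∑ k, ‖v k‖ ^ 2 ≤ ∑ k : Fin (m+1), |v i| ^ 2 := by
              refine Finset.sum_le_sum fun k _ => ?_
              rw [Real.norm_eq_abs]
              exact pow_le_pow_left₀ (abs_nonneg _) (hi' k) 2
          _ = ((m+1 : ℕ) : ℝ) * |v i| ^ 2 := by
              rw [Finset.sum_const, Finset.card_univ, Fintype.card_fin, nsmul_eq_mul]
      calc Real.sqrt (∑ k, ‖v k‖ ^ 2) ≤ Real.sqrt (((m+1 : ℕ) : ℝ) * |v i| ^ 2) :=
            Real.sqrt_le_sqrt h2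
        _ = Real.sqrt ((m+1 : ℕ)) * |v i| := by
            rw [Real.sqrt_mul (by positivity), Real.sqrt_sq (abs_nonneg _)]
    have hs0 : 0 < Real.sqrt ((m+1 : ℕ)) := Real.sqrt_pos.mpr (by positivity)
    have h3 : |v i|⁻¹ ≤ Real.sqrt ((m+1 : ℕ)) * ‖v‖⁻¹ := by
      have heq : Real.sqrt ((m+1 : ℕ)) * ‖v‖⁻¹ = Real.sqrt ((m+1 : ℕ)) / ‖v‖ := by
        rw [div_eq_mul_inv]
      rw [inv_eq_one_div, heq, div_le_div_iff₀ habs hvn, one_mul]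
      linarith [h1]
    have hmm : (m + 1) - 1 = m := by omega
    rw [hmm]
    calc T = (q:ℝ) * |v i|⁻¹ := by rw [hT]; ring
      _ ≤ Q ^ m * (Real.sqrt ((m+1 : ℕ)) * ‖v‖⁻¹) := by
          apply mul_le_mul hqQ h3 (by positivity) (by positivity)
      _ = Real.sqrt ((m+1 : ℕ)) * ‖v‖⁻¹ * Q ^ m := by ring

end Elliptic
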